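/- Let x, y ∈ R^n with 0 < |x| ≤ 1 and 0 < |y| ≤ 1, and let σ(x) = I - (1-√(1-|x|²)) x xᵀ/|x|². Then the squared Frobenius norm satisfies ‖σ(x) - σ(y)‖_F² = (√(1-|x|²) - √(1-|y|²))² + 2(1-√(1-|x|²))(1-√(1-|y|²)) (|x|²|y|² - (x·y)²)/(|x|²|y|²). -/
import Mathlib


/-- Frobenius norm identity: for `0 < |x| ≤ 1`, `0 < |y| ≤ 1`,
`‖σ(x) - σ(y)‖_F² = (√(1-|x|²) - √(1-|y|²))²
  + 2(1-√(1-|x|²))(1-√(1-|y|²)) (|x|²|y|² - (x·y)²)/(|x|²|y|²)`. -/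
theorem stmt12 (n : ℕ) (x y : Fin n → ℝ)
    (hx0 : 0 < ∑ i, x i ^ 2) (hx1 : ∑ i, x i ^ 2 ≤ 1)
    (hy0 : 0 < ∑ i, y i ^ 2) (hy1 : ∑ i, y i ^ 2 ≤ 1)
    (σx σy : Matrix (Fin n) (Fin n) ℝ)
    (hσx : σx = 1 - ((1 - Real.sqrt (1 - ∑ i, x i ^ 2)) / (∑ i, x i ^ 2)) •
        Matrix.vecMulVec x x)
    (hσy : σy = 1 - ((1 - Real.sqrt (1 - ∑ i, y i ^ 2)) / (∑ i, y i ^ 2)) •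
        Matrix.vecMulVec y y) :
    ∑ i, ∑ j, (σx i j - σy i j) ^ 2
      = (Real.sqrt (1 - ∑ i, x i ^ 2) - Real.sqrt (1 - ∑ i, y i ^ 2)) ^ 2
        + 2 * (1 - Real.sqrt (1 - ∑ i, x i ^ 2)) * (1 - Real.sqrt (1 - ∑ i, y i ^ 2))
          * ((∑ i, x i ^ 2) * (∑ i, y i ^ 2) - (∑ i, x i * y i) ^ 2)
          / ((∑ i, x i ^ 2) * (∑ i, y i ^ 2)) := by
  set X := ∑ i, x i ^ 2 with hX
  set Y := ∑ i, y i ^ 2 with hY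
  set S := ∑ i, x i * y i with hS
  set a : ℝ := (1 - Real.sqrt (1 - X)) / X with ha
  set b : ℝ := (1 - Real.sqrt (1 - Y)) / Y with hb
  have key : ∑ i, ∑ j, (σx i j - σy i j) ^ 2
      = a ^ 2 * X * X - 2 * a * b * S * S + b ^ 2 * Y * Y := by
    have h1 : ∑ i, ∑ j, (σx i j - σy i j) ^ 2
        = ∑ i, ∑ j, (a ^ 2 * (x i ^ 2 * x j ^ 2)
            - 2 * a * b * ((x i * y i) * (x j * y j))
            + b ^ 2 * (y i ^ 2 * y j ^ 2)) := by
      refine Finset.sum_congr rfl fun i _ => Finset.sum_congr rfl fun j _ => ?_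
      simp only [hσx, hσy, Matrix.sub_apply, Matrix.one_apply, Matrix.smul_apply,
        Matrix.vecMulVec_apply, smul_eq_mul]
      ring
    rw [h1]
    simp only [Finset.sum_add_distrib, Finset.sum_sub_distrib, ← Finset.mul_sum,
      ← Finset.sum_mul]
    rw [← hX, ← hY, ← hS]
    ring
  rw [key]
  have hXne : X ≠ 0 := ne_of_gt hx0
  have hYne : Y ≠ 0 := ne_of_gt hy0
  rw [ha, hb]
  field_simp
  ring
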